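/- Let m̄ ≥ 1 be a natural number, let x₀, x₁, …, x_{m̄+1} be positive reals and a₀, a₁, …, a_{m̄+1} nonnegative reals with a_{m̄+1} = 0, and let 0 < ζ ≤ 1/2. Suppose that for every m with 1 ≤ m ≤ m̄ one has x_m · a_m ≤ ζ · x_{m−1} · a_{m−1} + ζ · x_{m+1} · a_{m+1}. Then for every m with 0 ≤ m ≤ m̄, a_m ≤ ((1 − √(1 − 4ζ²)) / (2ζ))^m · (x₀ a₀) / x_m. -/

import Mathlib

/-- Recursive sequence bound: if `x₀,…,x_{m̄+1} > 0`, `a₀,…,a_{m̄+1} ≥ 0` with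
`a_{m̄+1} = 0`, `0 < ζ ≤ 1/2`, and `x_m a_m ≤ ζ x_{m-1} a_{m-1} + ζ x_{m+1} a_{m+1}`
for `1 ≤ m ≤ m̄`, then `a_m ≤ ((1 - √(1 - 4ζ²))/(2ζ))^m (x₀ a₀)/x_m` for `0 ≤ m ≤ m̄`. -/
theorem stmt_4 (mb : ℕ) (hmb : 1 ≤ mb) (x a : ℕ → ℝ) (ζ : ℝ)
    (hx : ∀ m ≤ mb + 1, 0 < x m) (ha : ∀ m ≤ mb + 1, 0 ≤ a m)
    (hlast : a (mb + 1) = 0) (hζ0 : 0 < ζ) (hζ : ζ ≤ 1 / 2)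
    (hrec : ∀ m, 1 ≤ m → m ≤ mb →
      x m * a m ≤ ζ * (x (m - 1) * a (m - 1)) + ζ * (x (m + 1) * a (m + 1))) :
    ∀ m ≤ mb,
      a m ≤ ((1 - Real.sqrt (1 - 4 * ζ ^ 2)) / (2 * ζ)) ^ m * (x 0 * a 0) / x m := by
  set s := Real.sqrt (1 - 4 * ζ ^ 2) with hs
  have hs2 : s ^ 2 = 1 - 4 * ζ ^ 2 := Real.sq_sqrt (by nlinarith)
  have hs0 : 0 ≤ s := Real.sqrt_nonneg _
  have hs1 : s ≤ 1 := by nlinarith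
  set r := (1 - s) / (2 * ζ) with hr
  have hr0 : 0 ≤ r := by
    apply div_nonneg <;> nlinarith
  have hr1 : r ≤ 1 := by
    rw [div_le_one (by linarith)]
    nlinarith
  have hrq : r - ζ * r ^ 2 = ζ := by
    field_simp [hr]
    have h2 : r * (2 * ζ) = 1 - s := by
      rw [hr, div_mul_cancel₀]; positivity
    have h3 : (r * (1 - r * ζ) - ζ) * (2 * ζ) = 0 := by
      linear_combination (1 - (r * (2 * ζ) + 1 - s) / 2) * h2 + (-1/2 : ℝ) * hs2
    rcases mul_eq_zero.mp h3 with h4 | h4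
    · linarith
    · linarith
  have hb0 : ∀ m ≤ mb + 1, 0 ≤ x m * a m := fun m hm =>
    mul_nonneg (hx m hm).le (ha m hm)
  -- downward induction: b_m ≤ r * b_{m-1}
  have key : ∀ j, ∀ m, m + j = mb + 1 → 1 ≤ m →
      x m * a m ≤ r * (x (m - 1) * a (m - 1)) := by
    intro j
    induction j with
    | zero =>
      intro m hm _
      simp only [Nat.add_zero] at hm
      subst hm
      rw [hlast, mul_zero]
      exact mul_nonneg hr0 (hb0 _ (by omega))
    | succ k ih =>
      intro m hm hm1
      have hmle : m ≤ mb := by omega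
      have h1 := hrec m hm1 hmle
      have h2 := ih (m + 1) (by omega) (by omega)
      simp only [Nat.add_sub_cancel] at h2
      have hzr : ζ * r < 1 := by nlinarith
      have hbm1 : 0 ≤ x (m - 1) * a (m - 1) := hb0 _ (by omega)
      nlinarith [mul_nonneg (mul_nonneg hζ0.le hr0) (hb0 m (by omega))]
  -- forward induction: b_m ≤ r^m * b_0
  have main : ∀ m ≤ mb, x m * a m ≤ r ^ m * (x 0 * a 0) := by
    intro m
    induction m with
    | zero => intro _; simp
    | succ k ih =>
      intro hk
      have h1 := key (mb - k) (k + 1) (by omega) (by omega)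
      simp only [Nat.add_sub_cancel] at h1
      have h2 := ih (by omega)
      calc x (k + 1) * a (k + 1) ≤ r * (x k * a k) := h1
        _ ≤ r * (r ^ k * (x 0 * a 0)) := by
            exact mul_le_mul_of_nonneg_left h2 hr0
        _ = r ^ (k + 1) * (x 0 * a 0) := by ring
  intro m hm
  have hxm := hx m (by omega)
  rw [div_eq_mul_inv, ← div_eq_mul_inv, le_div_iff₀ hxm, mul_comm]
  exact main m hm
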